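/- Let J ⊆ J₀, vJ ∈ Seq(J;k), and let vI and vI′ be two unfoldings of vJ. Then Sym_π(A_{vI}) = Sym_π(A_{vI′}) in ℂ(t), and for every s ∈ {1,…,n}, Sym_π(B_{vI}(·; z_s)) = Sym_π(B_{vI′}(·; z_s)) in ℂ(t). -/

import Mathlib

/- STATEMENT 10.
`π : C → J₀` is a surjective map of finite sets with π-invariant exponents; the group
`Σ_π = {σ ∈ Perm(C) | π∘σ = π}` acts on `ℂ(t)` by permuting the variables, and
`Sym_π = ∑_{σ∈Σ_π} σ`.  For `vJ ∈ Seq(J;k)` (a list over `J₀` in which every entry `j`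
occurs exactly `k_j = card(π⁻¹(j))` times) and two unfoldings `vI`, `vI′` of `vJ`
(nodup lists in `C` with `π ∘ vI = vJ = π ∘ vI′`), one has
`Sym_π(A_{vI}) = Sym_π(A_{vI′})` and `Sym_π(B_{vI}(·;z_s)) = Sym_π(B_{vI′}(·;z_s))` for all `s`. -/

noncomputable section

abbrev FF (C : Type) := FractionRing (MvPolynomial C ℂ)

def tv {C : Type} (i : C) : FF C := algebraMap (MvPolynomial C ℂ) (FF C) (MvPolynomial.X i)

def cc {C : Type} (w : ℂ) : FF C := algebraMap (MvPolynomial C ℂ) (FF C) (MvPolynomial.C w)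

/-- `A_{vI}(t)`. -/
def Afun {C : Type} (a : C → C → ℂ) (l : List C) : FF C :=
  ∏ p : Fin l.length, if p.val = 0 then 1 else
    ∑ q : Fin l.length, if q < p then
      cc (a (l.get p) (l.get q)) / (tv (l.get p) - tv (l.get q)) else 0

/-- `B_{vI}(t; z_s)`. -/
def Bfun {C : Type} (a : C → C → ℂ) (b : C → ℂ) (z : ℂ) (l : List C) : FF C :=
  ∏ p : Fin l.length,
    (cc (b (l.get p)) / (tv (l.get p) - cc z)
      + ∑ q : Fin l.length, if q < p then
          cc (a (l.get p) (l.get q)) / (tv (l.get p) - tv (l.get q)) else 0)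

/-- The field automorphism of `ℂ(t)` permuting the variables `t_i` by `σ`. -/
def permF {C : Type} (σ : Equiv.Perm C) : FF C ≃+* FF C :=
  IsFractionRing.ringEquivOfRingEquiv (MvPolynomial.renameEquiv ℂ σ).toRingEquiv

/-- The subgroup `Σ_π ⊆ Perm(C)` of permutations preserving the fibers of `π`, as a finset. -/
def SigmaPi {C J₀ : Type} [Fintype C] [DecidableEq C] [DecidableEq J₀] (π : C → J₀) :
    Finset (Equiv.Perm C) :=
  Finset.univ.filter fun σ => ∀ i, π (σ i) = π i

/-- `Sym_π = ∑_{σ ∈ Σ_π} σ`, applied to `f ∈ ℂ(t)`. -/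
def SymPi {C J₀ : Type} [Fintype C] [DecidableEq C] [DecidableEq J₀] (π : C → J₀)
    (f : FF C) : FF C :=
  ∑ σ ∈ SigmaPi π, permF σ f

lemma permF_algebraMap {C : Type} (σ : Equiv.Perm C) (p : MvPolynomial C ℂ) :
    permF σ (algebraMap (MvPolynomial C ℂ) (FF C) p)
      = algebraMap (MvPolynomial C ℂ) (FF C) (MvPolynomial.rename σ p) := by
  simp [permF]


lemma permF_tv {C : Type} (σ : Equiv.Perm C) (i : C) : permF σ (tv i) = tv (σ i) := by
  simp [tv, permF_algebraMap]


lemma permF_cc {C : Type} (σ : Equiv.Perm C) (w : ℂ) : permF σ (cc w) = cc w := by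
  simp [cc, permF_algebraMap]


lemma permF_comp {C : Type} (σ τ : Equiv.Perm C) (f : FF C) :
    permF τ (permF σ f) = permF (τ * σ) f := by
  have h : ((permF τ : FF C ≃+* FF C) : FF C →+* FF C).comp
      ((permF σ : FF C ≃+* FF C) : FF C →+* FF C)
      = ((permF (τ * σ) : FF C ≃+* FF C) : FF C →+* FF C) := by
    apply IsLocalization.ringHom_ext (nonZeroDivisors (MvPolynomial C ℂ))
    apply MvPolynomial.ringHom_ext
    · intro r
      show permF τ (permF σ (algebraMap (MvPolynomial C ℂ) (FF C) (MvPolynomial.C r)))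
        = permF (τ * σ) (algebraMap (MvPolynomial C ℂ) (FF C) (MvPolynomial.C r))
      simp only [permF_algebraMap, MvPolynomial.rename_C]
    · intro i
      show permF τ (permF σ (algebraMap (MvPolynomial C ℂ) (FF C) (MvPolynomial.X i)))
        = permF (τ * σ) (algebraMap (MvPolynomial C ℂ) (FF C) (MvPolynomial.X i))
      simp only [permF_algebraMap, MvPolynomial.rename_X, Equiv.Perm.mul_apply]
  exact DFunLike.congr_fun h f


lemma permF_Afun {C J₀ : Type} (π : C → J₀) (a : C → C → ℂ)
    (hainv : ∀ i i' i'' i''', π i = π i'' → π i' = π i''' → a i i' = a i'' i''')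
    (σ : Equiv.Perm C) (hσ : ∀ i, π (σ i) = π i) (l : List C) :
    permF σ (Afun a l) = Afun a (l.map σ) := by
  have hlen : (l.map σ).length = l.length := l.length_map σ
  unfold Afun
  rw [map_prod]
  refine Fintype.prod_equiv (finCongr hlen.symm) _ _ fun p => ?_
  simp only [apply_ite (permF σ), map_one, map_sum, map_zero, map_div₀, map_sub,
    permF_tv, permF_cc, finCongr_apply, Fin.coe_cast, List.get_eq_getElem, List.getElem_map,
    Fin.lt_def]
  by_cases hp0 : (p : ℕ) = 0
  · simp [hp0]
  · simp only [hp0, if_false]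
    refine Fintype.sum_equiv (finCongr hlen.symm) _ _ fun q => ?_
    simp only [finCongr_apply, Fin.coe_cast]
    by_cases hqp : (q : ℕ) < (p : ℕ)
    · simp only [hqp, if_true]
      rw [hainv (l[(p : ℕ)]) (l[(q : ℕ)]) (σ l[(p : ℕ)]) (σ l[(q : ℕ)])
        (hσ _).symm (hσ _).symm]
    · simp [hqp]


lemma permF_Bfun {C J₀ : Type} (π : C → J₀) (a : C → C → ℂ) (b : C → ℂ) (z : ℂ)
    (hainv : ∀ i i' i'' i''', π i = π i'' → π i' = π i''' → a i i' = a i'' i''')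
    (hbinv : ∀ i i', π i = π i' → b i = b i')
    (σ : Equiv.Perm C) (hσ : ∀ i, π (σ i) = π i) (l : List C) :
    permF σ (Bfun a b z l) = Bfun a b z (l.map σ) := by
  have hlen : (l.map σ).length = l.length := l.length_map σ
  unfold Bfun
  rw [map_prod]
  refine Fintype.prod_equiv (finCongr hlen.symm) _ _ fun p => ?_
  simp only [map_add, apply_ite (permF σ), map_one, map_sum, map_zero, map_div₀, map_sub,
    permF_tv, permF_cc, finCongr_apply, Fin.coe_cast, List.get_eq_getElem, List.getElem_map,
    Fin.lt_def]
  congr 1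
  · rw [hbinv (l[(p : ℕ)]) (σ l[(p : ℕ)]) (hσ _).symm]
  · refine Fintype.sum_equiv (finCongr hlen.symm) _ _ fun q => ?_
    simp only [finCongr_apply, Fin.coe_cast]
    by_cases hqp : (q : ℕ) < (p : ℕ)
    · simp only [hqp, if_true]
      rw [hainv (l[(p : ℕ)]) (l[(q : ℕ)]) (σ l[(p : ℕ)]) (σ l[(q : ℕ)])
        (hσ _).symm (hσ _).symm]
    · simp [hqp]


lemma SymPi_permF {C J₀ : Type} [Fintype C] [DecidableEq C] [DecidableEq J₀] (π : C → J₀)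
    (σ : Equiv.Perm C) (hσ : ∀ i, π (σ i) = π i) (f : FF C) :
    SymPi π (permF σ f) = SymPi π f := by
  have hσ' : ∀ i, π (σ⁻¹ i) = π i := by
    intro i
    conv_rhs => rw [← Equiv.apply_symm_apply σ i]
    exact (hσ _).symm
  unfold SymPi
  refine Finset.sum_nbij' (fun τ => τ * σ) (fun τ => τ * σ⁻¹) ?_ ?_ ?_ ?_ ?_
  · intro τ hτ
    simp only [SigmaPi, Finset.mem_filter, Finset.mem_univ, true_and] at hτ ⊢
    intro i
    rw [Equiv.Perm.mul_apply, hτ, hσ]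
  · intro τ hτ
    simp only [SigmaPi, Finset.mem_filter, Finset.mem_univ, true_and] at hτ ⊢
    intro i
    rw [Equiv.Perm.mul_apply, hτ, hσ']
  · intro τ _; group
  · intro τ _; group
  · intro τ _
    rw [permF_comp]

theorem statement10 {C J₀ : Type} [Fintype C] [DecidableEq C] [Fintype J₀] [DecidableEq J₀]
    (π : C → J₀) (hπ : Function.Surjective π)
    (n : ℕ) (hn : 1 ≤ n) (z : Fin n → ℂ) (hz : Function.Injective z)
    (a : C → C → ℂ) (ha : ∀ i j, a i j = a j i) (b : C → Fin n → ℂ)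
    -- the exponents are π-invariant
    (hainv : ∀ i i' i'' i''', π i = π i'' → π i' = π i''' → a i i' = a i'' i''')
    (hbinv : ∀ i i' s, π i = π i' → b i s = b i' s)
    -- `vJ ∈ Seq(J;k)`: each entry `j` of `vJ` occurs exactly `k_j = card(π⁻¹(j))` times
    (vJ : List J₀)
    (hcount : ∀ j ∈ vJ.toFinset,
      vJ.count j = (Finset.univ.filter fun i => π i = j).card)
    -- two unfoldings of `vJ`
    (vI vI' : List C) (hnd : vI.Nodup) (hnd' : vI'.Nodup)
    (hunf : vI.map π = vJ) (hunf' : vI'.map π = vJ) :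
    SymPi π (Afun a vI) = SymPi π (Afun a vI') ∧
      ∀ s : Fin n,
        SymPi π (Bfun a (fun i => b i s) (z s) vI)
          = SymPi π (Bfun a (fun i => b i s) (z s) vI') := by
  -- lengths
  have hlen : vI.length = vI'.length := by
    have h1 : vI.length = vJ.length := by rw [← hunf, List.length_map]
    have h2 : vI'.length = vJ.length := by rw [← hunf', List.length_map]
    rw [h1, h2]
  -- the two unfoldings have the same underlying set
  have hcard : (Finset.univ.filter fun i => π i ∈ vJ).card = vJ.length := by
    have hU : (Finset.univ.filter fun i => π i ∈ vJ)
        = vJ.toFinset.biUnion (fun j => Finset.univ.filter fun i => π i = j) := by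
      ext i
      simp only [Finset.mem_filter, Finset.mem_univ, true_and, Finset.mem_biUnion,
        List.mem_toFinset]
      constructor
      · intro h; exact ⟨π i, h, rfl⟩
      · rintro ⟨j, hj, rfl⟩; exact hj
    rw [hU, Finset.card_biUnion]
    · rw [Finset.sum_congr rfl fun j hj => (hcount j hj).symm]
      exact List.sum_toFinset_count_eq_length vJ
    · intro x _ y _ hxy
      simp only [Finset.disjoint_left, Finset.mem_filter, Finset.mem_univ, true_and]
      rintro i rfl h
      exact hxy h
  have htoF : ∀ (l : List C), l.Nodup → l.map π = vJ →
      l.toFinset = Finset.univ.filter fun i => π i ∈ vJ := by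
    intro l hl hm
    apply Finset.eq_of_subset_of_card_le
    · intro i hi
      simp only [Finset.mem_filter, Finset.mem_univ, true_and]
      rw [← hm]
      exact List.mem_map_of_mem (f := π) (List.mem_toFinset.1 hi)
    · rw [List.toFinset_card_of_nodup hl, hcard, ← hm, List.length_map]
  have hmem : ∀ i, i ∈ vI ↔ i ∈ vI' := by
    intro i
    rw [← List.mem_toFinset, ← List.mem_toFinset, htoF vI hnd hunf, htoF vI' hnd' hunf']
  -- construct the fiber-preserving permutation carrying vI to vI'
  let F : C → C := fun i =>
    if h : i ∈ vI then vI'[vI.idxOf i]'(hlen ▸ List.idxOf_lt_length_iff.2 h) else i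
  let G : C → C := fun i =>
    if h : i ∈ vI' then vI[vI'.idxOf i]'(hlen ▸ List.idxOf_lt_length_iff.2 h) else i
  have hF : ∀ (p : ℕ) (hp : p < vI.length), F (vI[p]'hp) = vI'[p]'(hlen ▸ hp) := by
    intro p hp
    have hm : vI[p]'hp ∈ vI := List.getElem_mem _
    have hidx : vI.idxOf (vI[p]'hp) = p := List.Nodup.idxOf_getElem hnd p hp
    simp only [F, dif_pos hm]
    simp only [hidx]
  have hG : ∀ (p : ℕ) (hp : p < vI'.length), G (vI'[p]'hp) = vI[p]'(hlen ▸ hp) := by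
    intro p hp
    have hm : vI'[p]'hp ∈ vI' := List.getElem_mem _
    have hidx : vI'.idxOf (vI'[p]'hp) = p := List.Nodup.idxOf_getElem hnd' p hp
    simp only [G, dif_pos hm]
    simp only [hidx]
  have hGF : Function.LeftInverse G F := by
    intro i
    by_cases h : i ∈ vI
    · obtain ⟨p, hp, rfl⟩ := List.mem_iff_getElem.1 h
      rw [hF p hp, hG p (hlen ▸ hp)]
    · have h' : i ∉ vI' := fun hh => h ((hmem i).2 hh)
      simp only [F, G, dif_neg h, dif_neg h']
  have hFG : Function.RightInverse G F := by
    intro i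
    by_cases h : i ∈ vI'
    · obtain ⟨p, hp, rfl⟩ := List.mem_iff_getElem.1 h
      rw [hG p hp, hF p (hlen ▸ hp)]
    · have h' : i ∉ vI := fun hh => h ((hmem i).1 hh)
      simp only [F, G, dif_neg h, dif_neg h']
  let σ : Equiv.Perm C := ⟨F, G, hGF, hFG⟩
  have hσπ : ∀ i, π (σ i) = π i := by
    intro i
    show π (F i) = π i
    by_cases h : i ∈ vI
    · obtain ⟨p, hp, rfl⟩ := List.mem_iff_getElem.1 h
      rw [hF p hp]
      have h3 : (vI.map π)[p]'(by simpa using hp) = π (vI[p]'hp) := List.getElem_map π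
      have h3' : (vI'.map π)[p]'(by simpa using (hlen ▸ hp : p < vI'.length))
          = π (vI'[p]'(hlen ▸ hp)) := List.getElem_map π
      rw [← h3, ← h3']
      rw [List.getElem_of_eq hunf, List.getElem_of_eq hunf']
    · simp only [F, dif_neg h]
  have hmap : vI.map σ = vI' := by
    apply List.ext_getElem
    · rw [List.length_map]; exact hlen
    · intro p hp1 hp2
      rw [List.getElem_map]
      exact hF p (by rwa [List.length_map] at hp1)
  refine ⟨?_, ?_⟩
  · calc SymPi π (Afun a vI) = SymPi π (permF σ (Afun a vI)) := (SymPi_permF π σ hσπ _).symm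
      _ = SymPi π (Afun a (vI.map σ)) := by rw [permF_Afun π a hainv σ hσπ]
      _ = SymPi π (Afun a vI') := by rw [hmap]
  · intro s
    calc SymPi π (Bfun a (fun i => b i s) (z s) vI)
        = SymPi π (permF σ (Bfun a (fun i => b i s) (z s) vI)) :=
          (SymPi_permF π σ hσπ _).symm
      _ = SymPi π (Bfun a (fun i => b i s) (z s) (vI.map σ)) := by
          rw [permF_Bfun π a (fun i => b i s) (z s) hainv
            (fun i i' h => hbinv i i' s h) σ hσπ]
      _ = SymPi π (Bfun a (fun i => b i s) (z s) vI') := by rw [hmap]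

end
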